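/- Let A = {a, b} be a binary alphabet and E the automorphism of A* interchanging a and b. If z ∈ A and w ∈ A* is not a power of z, then ψ(wz) = ψ(w) z E(z) ψ(w') for some prefix w' of w. -/

import Mathlib

open List

/-- Right palindromic closure: `w⁺ = u Q u~` where `Q` is the longest palindromic
suffix of `w = uQ`; equivalently the shortest palindrome having `w` as a prefix. -/
noncomputable def palClosure {A : Type*} (w : List A) : List A :=
  letI : DecidablePred fun k => (w.drop k).reverse = w.drop k :=
    fun _ => Classical.propDecidable _
  w ++ (w.take (Nat.find (⟨w.length, by simp⟩ :
    ∃ k, (w.drop k).reverse = w.drop k))).reverse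

/-- The palindromization map `ψ_X` relative to a code `X`, evaluated on the
(unique) `X`-factorization `l = [x₁, …, xₙ]` of a word of `X*`. -/
noncomputable def psiList {A : Type*} (l : List (List A)) : List A :=
  l.foldl (fun p x => palClosure (p ++ x)) []

/-- The (usual) palindromization map `ψ` on words, letter by letter. -/
noncomputable def psiWord {A : Type*} (w : List A) : List A :=
  w.foldl (fun p a => palClosure (p ++ [a])) []

/-- `X` is a code: nonempty words with unique factorization over `X`. -/
def IsCode {A : Type*} (X : Set (List A)) : Prop :=
  (∀ x ∈ X, x ≠ []) ∧
  ∀ l l' : List (List A), (∀ w ∈ l, w ∈ X) → (∀ w ∈ l', w ∈ X) →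
    l.flatten = l'.flatten → l = l'

/-- `X` is a prefix code: nonempty words, none a proper prefix of another. -/
def IsPrefixCode {A : Type*} (X : Set (List A)) : Prop :=
  (∀ x ∈ X, x ≠ []) ∧ ∀ x ∈ X, ∀ y ∈ X, x <+: y → x = y

/-- `X` is a maximal prefix code over `A`. -/
def IsMaximalPrefixCode {A : Type*} (X : Set (List A)) : Prop :=
  IsPrefixCode X ∧ ∀ Y : Set (List A), IsPrefixCode Y → X ⊆ Y → X = Y

/-- `w ∈ X*`. -/
def InStar {A : Type*} (X : Set (List A)) (w : List A) : Prop :=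
  ∃ l : List (List A), (∀ u ∈ l, u ∈ X) ∧ l.flatten = w

/-- The finite word `w` is a prefix of the infinite word `s`. -/
def PrefixOfInf {A : Type*} (w : List A) (s : ℕ → A) : Prop :=
  ∀ i : ℕ, ∀ h : i < w.length, w.get ⟨i, h⟩ = s i

/-- The finite word `w` is a factor of the infinite word `s`. -/
def FactorOfInf {A : Type*} (w : List A) (s : ℕ → A) : Prop :=
  ∃ i : ℕ, w = List.ofFn fun k : Fin w.length => s (i + k.1)

/-- `X` has finite deciphering delay. -/
def FiniteDecipheringDelay {A : Type*} (X : Set (List A)) : Prop :=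
  ∃ k : ℕ, ∀ x ∈ X, ∀ x' ∈ X,
    (∃ (l l' : List (List A)) (r : List A),
      (∀ w ∈ l, w ∈ X) ∧ l.length = k ∧ (∀ w ∈ l', w ∈ X) ∧
      x ++ l.flatten ++ r = x' ++ l'.flatten) → x = x'

/-- The sequence `y = y₁y₂⋯ ∈ X^ω` is alternating. -/
def Alternating {A : Type*} (y : ℕ → List A) : Prop :=
  ∃ a b : A, a ≠ b ∧ ∃ (lam : List A) (idx : ℕ → ℕ), StrictMono idx ∧
    ∀ k : ℕ, (lam ++ [a]) <+: y (idx (2 * k)) ∧ (lam ++ [b]) <+: y (idx (2 * k + 1))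

/-- The infinite word `s` is ultimately periodic. -/
def UltimatelyPeriodic {A : Type*} (s : ℕ → A) : Prop :=
  ∃ p : ℕ, 0 < p ∧ ∃ N : ℕ, ∀ n ≥ N, s (n + p) = s n

/-- The infinite word `s` is uniformly recurrent: every factor occurs in every
sufficiently long factor of `s`. -/
def UniformlyRecurrent {A : Type*} (s : ℕ → A) : Prop :=
  ∀ w : List A, FactorOfInf w s →
    ∃ N : ℕ, ∀ i : ℕ, w <:+: List.ofFn fun k : Fin N => s (i + k.1)

/-- Factor complexity of the infinite word `s`. -/
noncomputable def complexity {A : Type*} (s : ℕ → A) (n : ℕ) : ℕ :=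
  {u : List A | u.length = n ∧ FactorOfInf u s}.ncard

/-- A word `w` is primitive if it is not a proper power. -/
def Primitive {A : Type*} (w : List A) : Prop :=
  ∀ (v : List A) (n : ℕ), 1 < n → w ≠ (List.replicate n v).flatten

lemma palClosure_eq {A : Type*} (W : List A) (k : ℕ)
    (hk : (W.drop k).reverse = W.drop k)
    (hmin : ∀ j < k, ¬ (W.drop j).reverse = W.drop j) :
    palClosure W = W ++ (W.take k).reverse := by
  letI : DecidablePred fun k => (W.drop k).reverse = W.drop k :=
    fun _ => Classical.propDecidable _
  unfold palClosure
  congr 3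
  have hex : ∃ k, (W.drop k).reverse = W.drop k := ⟨W.length, by simp⟩
  exact Nat.le_antisymm (Nat.find_le hk)
    (Nat.le_of_not_lt fun h => hmin _ h (Nat.find_spec hex))

lemma palClosure_spec {A : Type*} (W : List A) :
    ∃ k ≤ W.length, (W.drop k).reverse = W.drop k ∧
      palClosure W = W ++ (W.take k).reverse := by
  letI : DecidablePred fun k => (W.drop k).reverse = W.drop k :=
    fun _ => Classical.propDecidable _
  have hex : ∃ k, (W.drop k).reverse = W.drop k := ⟨W.length, by simp⟩
  refine ⟨Nat.find hex, Nat.find_le (by simp), Nat.find_spec hex, ?_⟩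
  exact palClosure_eq W _ (Nat.find_spec hex)
    (fun j hj => Nat.find_min hex hj)

lemma palClosure_palindrome {A : Type*} (W : List A) :
    (palClosure W).reverse = palClosure W := by
  obtain ⟨k, hkle, hpal, heq⟩ := palClosure_spec W
  have hWrev : W.reverse = W.drop k ++ (W.take k).reverse := by
    conv_lhs => rw [← List.take_append_drop k W]
    rw [List.reverse_append, hpal]
  rw [heq, List.reverse_append, List.reverse_reverse, hWrev]
  rw [← List.append_assoc, List.take_append_drop]

lemma prefix_palClosure {A : Type*} (W : List A) : W <+: palClosure W := by
  obtain ⟨k, _, _, heq⟩ := palClosure_spec W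
  rw [heq]; exact List.prefix_append _ _

lemma palClosure_of_palindrome {A : Type*} (W : List A)
    (h : W.reverse = W) : palClosure W = W := by
  have := palClosure_eq W 0 (by simpa using h) (by omega)
  simpa using this

lemma palClosure_length_min {A : Type*} {W Q : List A}
    (hQ : Q.reverse = Q) (hWQ : W <+: Q) :
    (palClosure W).length ≤ Q.length := by
  obtain ⟨t, rfl⟩ := hWQ
  letI : DecidablePred fun k => (W.drop k).reverse = W.drop k :=
    fun _ => Classical.propDecidable _
  have hex : ∃ k, (W.drop k).reverse = W.drop k := ⟨W.length, by simp⟩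
  have hfind : palClosure W = W ++ (W.take (Nat.find hex)).reverse :=
    palClosure_eq W _ (Nat.find_spec hex) (fun j hj => Nat.find_min hex hj)
  by_cases hd : W.length ≤ t.length
  · have : Nat.find hex ≤ W.length := Nat.find_le (by simp)
    rw [hfind]
    simp only [List.length_append, List.length_reverse, List.length_take]
    omega
  · push_neg at hd
    have hrev : W.reverse = W.drop t.length ++ t := by
      have h1 : (W ++ t).reverse = W ++ t := hQ
      rw [List.reverse_append] at h1
      have h2 : W.reverse = (t.reverse ++ W.reverse).drop t.length := by simp
      rw [h1] at h2
      rw [h2, List.drop_append_of_le_length (le_of_lt hd)]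
    have hpal : (W.drop t.length).reverse = W.drop t.length := by
      rw [List.reverse_drop, hrev]
      exact List.take_left' (by simp)
    have : Nat.find hex ≤ t.length := Nat.find_le hpal
    rw [hfind]
    simp only [List.length_append, List.length_reverse, List.length_take]
    omega

lemma psiWord_concat {A : Type*} (w : List A) (x : A) :
    psiWord (w ++ [x]) = palClosure (psiWord w ++ [x]) := by
  simp [psiWord, List.foldl_append]

lemma psiWord_palindrome {A : Type*} (w : List A) :
    (psiWord w).reverse = psiWord w := by
  rcases List.eq_nil_or_concat w with rfl | ⟨v, x, rfl⟩
  · simp [psiWord]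
  · rw [List.concat_eq_append, psiWord_concat]
    exact palClosure_palindrome _

lemma psiWord_mono {A : Type*} {v w : List A} (h : v <+: w) :
    psiWord v <+: psiWord w := by
  induction w using List.reverseRecOn generalizing v with
  | nil =>
    have : v = [] := List.prefix_nil.mp h
    subst this; exact List.prefix_refl _
  | append_singleton t x ih =>
    by_cases hvt : v <+: t
    · refine (ih hvt).trans ?_
      rw [psiWord_concat]
      exact (List.prefix_append _ [x]).trans (prefix_palClosure _)
    · have hle : v.length ≤ t.length + 1 := by simpa using h.length_le
      have hlen : v.length = t.length + 1 := by
        rcases Nat.lt_or_ge v.length (t.length + 1) with hlt | hge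
        · exact absurd (List.prefix_of_prefix_length_le h (List.prefix_append _ _)
            (by simpa using Nat.lt_succ_iff.mp hlt)) hvt
        · omega
      have : v = t ++ [x] := h.eq_of_length (by simpa using hlen)
      subst this; exact List.prefix_refl _

lemma psiWord_replicate {A : Type*} (n : ℕ) (x : A) :
    psiWord (List.replicate n x) = List.replicate n x := by
  induction n with
  | zero => simp [psiWord]
  | succ n ih =>
    rw [List.replicate_succ', psiWord_concat, ih, ← List.replicate_succ']
    exact palClosure_of_palindrome _ List.reverse_replicate

lemma pal_peel {A : Type*} {x y : A} {S : List A}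
    (h : ([x] ++ S ++ [y]).reverse = [x] ++ S ++ [y]) :
    x = y ∧ S.reverse = S := by
  have h' : [y] ++ S.reverse ++ [x] = [x] ++ S ++ [y] := by
    simpa [List.reverse_append, List.append_assoc] using h
  have hy : y = x := by
    have := congrArg (fun l => l.head?) h'
    simpa using this
  subst hy
  have h2 : S.reverse ++ [y] = S ++ [y] := by
    have : y :: (S.reverse ++ [y]) = y :: (S ++ [y]) := by
      simpa [List.append_assoc] using h'
    simpa using this
  exact ⟨rfl, List.append_cancel_right h2⟩

-- every palindromic prefix of psiWord w is psiWord of a prefix of w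
lemma pal_prefix_psiWord {A : Type*} : ∀ (w q : List A), q.reverse = q →
    q <+: psiWord w → ∃ v, v <+: w ∧ psiWord v = q := by
  intro w
  induction w using List.reverseRecOn with
  | nil => intro q _ hq; exact ⟨[], List.prefix_refl _, by
      simpa [psiWord] using (List.prefix_nil.mp (by simpa [psiWord] using hq))⟩
  | append_singleton t x ih =>
    intro q hqpal hq
    rw [psiWord_concat] at hq
    by_cases hlen : q.length ≤ (psiWord t).length
    · have hqt : q <+: psiWord t := by
        refine List.prefix_of_prefix_length_le hq ?_ hlen
        exact (List.prefix_append _ _).trans (prefix_palClosure _)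
      obtain ⟨v, hv, hveq⟩ := ih q hqpal hqt
      exact ⟨v, hv.trans (List.prefix_append _ _), hveq⟩
    · push_neg at hlen
      have hpre : psiWord t ++ [x] <+: q := by
        refine List.prefix_of_prefix_length_le ?_ hq (by simpa using hlen)
        exact prefix_palClosure _
      have hmin : (palClosure (psiWord t ++ [x])).length ≤ q.length :=
        palClosure_length_min hqpal hpre
      have : q = palClosure (psiWord t ++ [x]) :=
        hq.eq_of_length (le_antisymm hq.length_le hmin)
      exact ⟨t ++ [x], List.prefix_refl _, by rw [psiWord_concat, this]⟩

lemma prefix_step {A : Type*} {v w : List A} {z : A} (hvw : v <+: w)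
    (h : psiWord v ++ [z] <+: psiWord w) : v ++ [z] <+: w := by
  have hne : v ≠ w := by
    rintro rfl
    have := h.length_le; simp at this
  obtain ⟨r, hr⟩ := hvw
  have hrne : r ≠ [] := by rintro rfl; simp at hr; exact hne hr
  obtain ⟨c, r', rfl⟩ := List.exists_cons_of_ne_nil hrne
  have hvc : v ++ [c] <+: w := by
    rw [← hr]; exact ⟨r', by simp⟩
  have h1 : psiWord v ++ [c] <+: psiWord (v ++ [c]) := by
    rw [psiWord_concat]; exact prefix_palClosure _
  have h1' := h1.trans (psiWord_mono hvc)
  have heq : psiWord v ++ [c] = psiWord v ++ [z] :=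
    (List.prefix_of_prefix_length_le h1' h (by simp)).eq_of_length (by simp)
  have : c = z := by simpa using List.append_cancel_left heq
  subst this
  exact hvc

lemma not_pal_drop {w : List Bool} {z : Bool} {B k : ℕ}
    (hmax : ∀ t, t ++ [z] <+: w → (psiWord t).length ≤ B)
    (hk : k + B + 2 ≤ (psiWord w).length) :
    ¬ (((psiWord w ++ [z]).drop k).reverse = (psiWord w ++ [z]).drop k) := by
  intro hpal
  set P := psiWord w with hP
  have hPp : P.reverse = P := psiWord_palindrome w
  have hkP : k ≤ P.length := by omega
  have hdrop : (P ++ [z]).drop k = P.drop k ++ [z] :=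
    List.drop_append_of_le_length hkP
  have hlen : (P.drop k).length = P.length - k := by simp
  have hne : P.drop k ≠ [] := by
    intro h0; rw [h0] at hlen; simp at hlen; omega
  obtain ⟨a, T, hT⟩ := List.exists_cons_of_ne_nil hne
  have hshape : (P ++ [z]).drop k = [a] ++ T ++ [z] := by
    rw [hdrop, hT]; simp
  rw [hshape] at hpal
  obtain ⟨haz, hTpal⟩ := pal_peel hpal
  subst haz
  have hsuff : a :: T <:+ P := hT ▸ List.drop_suffix k P
  have hpr : (a :: T).reverse <+: P.reverse := hsuff.reverse
  have hpr2 : T ++ [a] <+: P := by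
    simpa [List.reverse_cons, hTpal, hPp] using hpr
  have hTP : T <+: P := (List.prefix_append T [a]).trans hpr2
  obtain ⟨t, htw, hteq⟩ := pal_prefix_psiWord w T hTpal hTP
  have htzw : t ++ [a] <+: w := prefix_step htw (by rw [hteq]; exact hpr2)
  have hb := hmax t htzw
  have hTl : T.length = P.length - k - 1 := by
    have := congrArg List.length hT; simp at this; omega
  rw [hteq] at hb
  omega

def stripz (z : Bool) (w : List Bool) : List Bool :=
  (w.reverse.dropWhile (· = z)).reverse

lemma stripz_concat_self (z : Bool) (v : List Bool) :
    stripz z (v ++ [z]) = stripz z v := by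
  simp [stripz, List.dropWhile_cons]

lemma stripz_concat_ne (z : Bool) (v : List Bool) :
    stripz z (v ++ [!z]) = v ++ [!z] := by
  simp [stripz, List.dropWhile_cons]

lemma stripz_prefix (z : Bool) (w : List Bool) : stripz z w <+: w := by
  have := (List.dropWhile_suffix (l := w.reverse) (· = z)).reverse
  simpa [stripz] using this

lemma stripz_replicate_tail (z : Bool) (w : List Bool) :
    ∃ m, w = stripz z w ++ List.replicate m z := by
  refine ⟨(w.reverse.takeWhile (· = z)).length, ?_⟩
  have h1 : (w.reverse.takeWhile (· = z)).reverse
      = List.replicate (w.reverse.takeWhile (· = z)).length z := by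
    rw [List.eq_replicate_iff]
    constructor
    · simp
    · intro b hb
      have := List.mem_takeWhile_imp (List.mem_reverse.mp hb)
      simpa using this
  conv_lhs => rw [← List.reverse_reverse w,
    ← List.takeWhile_append_dropWhile (p := (· = z)) (l := w.reverse)]
  rw [List.reverse_append, h1, stripz]

lemma stripz_last {z : Bool} {w : List Bool} (h : stripz z w ≠ []) :
    ∃ q, stripz z w = q ++ [!z] := by
  have hd : w.reverse.dropWhile (· = z) ≠ [] := by
    intro h0; rw [stripz, h0] at h; simp at h
  have hh := List.head?_dropWhile_not (· = z) w.reverse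
  obtain ⟨a, T, hT⟩ := List.exists_cons_of_ne_nil hd
  rw [hT] at hh
  have ha : a ≠ z := by simpa using hh
  have ha' : a = !z := by cases a <;> cases z <;> simp_all
  refine ⟨T.reverse, ?_⟩
  rw [stripz, hT, ha']
  simp

lemma rep_not_pal {z : Bool} {j : ℕ} (hj : 1 ≤ j) :
    ¬ ((List.replicate j (!z) ++ [z]).reverse = List.replicate j (!z) ++ [z]) := by
  intro h
  obtain ⟨j', rfl⟩ := Nat.exists_eq_add_of_le hj
  rw [show (1 + j' : ℕ) = j' + 1 from by omega, List.replicate_succ] at h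
  have h'' : ([!z] ++ List.replicate j' (!z) ++ [z]).reverse
      = [!z] ++ List.replicate j' (!z) ++ [z] := by
    rw [show [!z] ++ List.replicate j' (!z) ++ [z]
      = ((!z) :: List.replicate j' (!z)) ++ [z] from by simp]
    exact h
  have := (pal_peel h'').1
  simp at this

theorem main : ∀ (N : ℕ) (w : List Bool) (z : Bool), w.length ≤ N →
    (∀ n, w ≠ List.replicate n z) →
    (stripz z w).dropLast <+: w ∧
    psiWord (w ++ [z]) = psiWord w ++ [z, !z] ++ psiWord (stripz z w).dropLast := by
  intro N
  induction N with
  | zero =>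
    intro w z hN hw
    have : w = [] := List.length_eq_zero_iff.mp (by omega)
    exact absurd (by simpa using this) (hw 0)
  | succ N ih =>
    intro w z hN hw
    rcases List.eq_nil_or_concat w with rfl | ⟨v, c, rfl⟩
    · exact absurd (by simp) (hw 0)
    rw [List.concat_eq_append] at hw hN ⊢
    have hvN : v.length ≤ N := by simp at hN; omega
    by_cases hcz : c = z
    · -- Case A : w = v ++ [z]
      subst hcz
      have hvz : ∀ n, v ≠ List.replicate n c := by
        intro n hv
        exact hw (n + 1) (by rw [hv, ← List.replicate_succ'])
      obtain ⟨hpr, hIH⟩ := ih v c hvN hvz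
      rw [stripz_concat_self]
      refine ⟨hpr.trans (List.prefix_append _ _), ?_⟩
      set Q := psiWord (stripz c v).dropLast with hQ
      set A := psiWord v with hA
      set P := psiWord (v ++ [c]) with hP
      have hApal : A.reverse = A := psiWord_palindrome v
      have hQpal : Q.reverse = Q := psiWord_palindrome _
      have hPpal : P.reverse = P := psiWord_palindrome _
      -- hIH : P = A ++ [c, !c] ++ Q
      have form2 : P = Q ++ ([!c] ++ ([c] ++ A)) := by
        conv_lhs => rw [← hPpal, hIH]
        simp [List.reverse_append, hApal, hQpal, List.append_assoc]
      have hPlen : P.length = A.length + 2 + Q.length := by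
        rw [hIH]; simp; omega
      set k₀ := Q.length + 1 with hk₀
      have hdropk : (P ++ [c]).drop k₀ = [c] ++ A ++ [c] := by
        rw [List.drop_append_of_le_length (by omega), form2]
        rw [show k₀ = Q.length + 1 from rfl, List.drop_append]
        simp
      have hpalk : ((P ++ [c]).drop k₀).reverse = (P ++ [c]).drop k₀ := by
        rw [hdropk]
        simp [List.reverse_append, hApal, List.append_assoc]
      have hmax : ∀ t, t ++ [c] <+: v ++ [c] → (psiWord t).length ≤ A.length := by
        intro t ht
        have hlt : t.length ≤ v.length := by
          have := ht.length_le; simp at this; omega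
        have htv : t <+: v := List.prefix_of_prefix_length_le
          ((List.prefix_append t [c]).trans ht) (List.prefix_append _ _) hlt
        exact (psiWord_mono htv).length_le
      have hclos : palClosure (P ++ [c]) = (P ++ [c]) ++ ((P ++ [c]).take k₀).reverse := by
        refine palClosure_eq _ k₀ hpalk ?_
        intro j hj
        exact not_pal_drop hmax (by rw [← hP]; omega)
      have htake : (P ++ [c]).take k₀ = Q ++ [!c] := by
        rw [List.take_append_of_le_length (by omega), form2]
        rw [show k₀ = Q.length + 1 from rfl, List.take_append]
        simp
      rw [psiWord_concat, ← hP, hclos, htake]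
      simp [List.reverse_append, hQpal, List.append_assoc]
    · -- Case B : w = v ++ [!z]
      have hc : c = !z := by cases c <;> cases z <;> simp_all
      subst hc
      rw [stripz_concat_ne, List.dropLast_concat]
      refine ⟨List.prefix_append _ _, ?_⟩
      by_cases hvrep : ∃ n, v = List.replicate n (!z)
      · -- B1
        obtain ⟨n, rfl⟩ := hvrep
        have hrep : List.replicate n (!z) ++ [!z] = List.replicate (n + 1) (!z) :=
          (List.replicate_succ' (n := n) (a := !z)).symm
        rw [hrep, psiWord_concat, psiWord_replicate, psiWord_replicate]
        have hclos : palClosure (List.replicate (n + 1) (!z) ++ [z])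
            = (List.replicate (n + 1) (!z) ++ [z])
              ++ ((List.replicate (n + 1) (!z) ++ [z]).take (n + 1)).reverse := by
          refine palClosure_eq _ (n + 1) ?_ ?_
          · rw [List.drop_append_of_le_length (by simp), List.drop_replicate]
            simp
          · intro j hj
            rw [List.drop_append_of_le_length (by simp; omega), List.drop_replicate]
            exact rep_not_pal (by omega)
        rw [hclos, List.take_append_of_le_length (by simp),
          List.take_replicate]
        rw [show min (n+1) (n+1) = n + 1 from by omega, List.reverse_replicate]
        rw [List.replicate_succ]
        simp [List.append_assoc]
      · -- B2
        push_neg at hvrep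
        obtain ⟨hpr2, hIH2⟩ := ih v (!z) hvN hvrep
        set q' := (stripz (!z) v).dropLast with hq'def
        rw [Bool.not_not] at hIH2
        set Q := psiWord q' with hQ
        set A := psiWord v with hA
        set P := psiWord (v ++ [!z]) with hP
        have hApal : A.reverse = A := psiWord_palindrome v
        have hQpal : Q.reverse = Q := psiWord_palindrome _
        have hPpal : P.reverse = P := psiWord_palindrome _
        -- hIH2 : P = A ++ [!z, z] ++ Q
        have hIH2' : P = A ++ ([!z] ++ ([z] ++ Q)) := by
          rw [hIH2]; simp [List.append_assoc]
        have hPlen : P.length = A.length + 2 + Q.length := by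
          rw [hIH2]; simp; omega
        set k₀ := A.length + 1 with hk₀
        have hdropk : (P ++ [z]).drop k₀ = [z] ++ Q ++ [z] := by
          rw [List.drop_append_of_le_length (by omega), hIH2']
          rw [show k₀ = A.length + 1 from rfl, List.drop_append]
          simp
        have hpalk : ((P ++ [z]).drop k₀).reverse = (P ++ [z]).drop k₀ := by
          rw [hdropk]
          simp [List.reverse_append, hQpal, List.append_assoc]
        have hmax : ∀ t, t ++ [z] <+: v ++ [!z] → (psiWord t).length ≤ Q.length := by
          intro t ht
          have hlt : t.length + 1 ≤ v.length + 1 := by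
            have := ht.length_le; simp at this; omega
          have htzv : t ++ [z] <+: v := by
            rcases List.prefix_concat_iff.mp ht with heq | hpre
            · exfalso
              have hl : t.length = v.length := by
                have := congrArg List.length heq; simp at this; omega
              have := List.append_inj_right heq hl
              simp at this
            · exact hpre
          obtain ⟨m, hm⟩ := stripz_replicate_tail (!z) v
          have hsne : stripz (!z) v ≠ [] := by
            intro h0; rw [h0] at hm; simp at hm; exact hvrep m hm
          obtain ⟨q, hq⟩ := stripz_last hsne
          rw [Bool.not_not] at hq
          have hq'q : q' = q := by rw [hq'def, hq, List.dropLast_concat]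
          have hvq : v = (q ++ [z]) ++ List.replicate m (!z) := by
            rw [hm, hq, List.append_assoc]
          have htlen : t.length ≤ q.length := by
            by_contra hcon
            push_neg at hcon
            have hidx : t.length < v.length := by
              have := htzv.length_le; simp at this; omega
            have h1 : (t ++ [z])[t.length]'(by simp) = z := by simp
            have h2 : v[t.length]'hidx = z := by
              rw [← List.IsPrefix.getElem htzv (by simp)]; exact h1
            have h3 : v[t.length]'hidx = !z := by
              have h4 := List.getElem_of_eq hvq hidx
              rw [h4, List.getElem_append_right (by simp; omega),
                List.getElem_replicate]
            rw [h2] at h3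
            simp at h3
          have htv : t <+: v := (List.prefix_append t [z]).trans htzv
          have hqv : q <+: v := by
            rw [hvq]
            exact (List.prefix_append q [z]).trans (List.prefix_append _ _)
          have htq : t <+: q := List.prefix_of_prefix_length_le htv hqv htlen
          rw [← hq'q] at htq
          exact (psiWord_mono htq).length_le
        have hclos : palClosure (P ++ [z]) = (P ++ [z]) ++ ((P ++ [z]).take k₀).reverse := by
          refine palClosure_eq _ k₀ hpalk ?_
          intro j hj
          exact not_pal_drop hmax (by rw [← hP]; omega)
        have htake : (P ++ [z]).take k₀ = A ++ [!z] := by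
          rw [List.take_append_of_le_length (by omega), hIH2']
          rw [show k₀ = A.length + 1 from rfl, List.take_append]
          simp
        rw [psiWord_concat, ← hP, hclos, htake]
        simp [List.reverse_append, hApal, List.append_assoc]

/-- Over the binary alphabet (here `Bool`, with `E` the letter
exchange `!`), if `z` is a letter and `w` is not a power of `z`, then
`ψ(wz) = ψ(w) z E(z) ψ(w')` for some prefix `w'` of `w`. -/
theorem stmt6 (z : Bool) (w : List Bool) (hw : ∀ n : ℕ, w ≠ List.replicate n z) :
    ∃ w' : List Bool, w' <+: w ∧
      psiWord (w ++ [z]) = psiWord w ++ [z, !z] ++ psiWord w' := by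
  obtain ⟨h1, h2⟩ := main w.length w z le_rfl hw
  exact ⟨_, h1, h2⟩
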